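/- In a Hilbert D-module over a commutative C*-algebra D, if ξ·d = ξ and η·d = 0 for a positive contraction d, then ⟨ξ+η, ξ+η⟩ ≤ max(‖ξ‖², ‖η‖²)·1 in the unitization of D. -/

import Mathlib

open scoped RightActions

open CStarModule in
private lemma comm_mul_nonneg {D : Type*} [CommCStarAlgebra D] [PartialOrder D]
    [StarOrderedRing D] {a b : D} (ha : 0 ≤ a) (hb : 0 ≤ b) : 0 ≤ a * b := by
  have h := star_left_conjugate_nonneg hb (CFC.sqrt a)
  have hsa : star (CFC.sqrt a) = CFC.sqrt a :=
    (IsSelfAdjoint.of_nonneg (CFC.sqrt_nonneg (a := a))).star_eq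
  rw [hsa] at h
  calc (0 : D) ≤ CFC.sqrt a * b * CFC.sqrt a := h
    _ = a * b := by
        rw [mul_comm (CFC.sqrt a) b, mul_assoc, CFC.sqrt_mul_sqrt_self a ha, mul_comm]

/-- If `ξ·d = ξ` and `η·d = 0` for a positive contraction `d` in a (unital) commutative
C*-algebra `D`, then `⟪ξ+η, ξ+η⟫ ≤ max (‖ξ‖²) (‖η‖²) • 1` in `D`. -/
theorem inner_self_add_le_max_smul_one
    {D X : Type*} [CommCStarAlgebra D] [PartialOrder D] [StarOrderedRing D]
    [NormedAddCommGroup X] [Module ℂ X] [SMul D X] [CStarModule D X]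
    (ξ η : X) (d : D) (hd0 : 0 ≤ d) (hd1 : ‖d‖ ≤ 1)
    (hξ : d • ξ = ξ) (hη : d • η = 0) :
    (inner D (ξ + η) (ξ + η) : D) ≤ (max (‖ξ‖ ^ 2) (‖η‖ ^ 2)) • (1 : D) := by
  set M : ℝ := max (‖ξ‖ ^ 2) (‖η‖ ^ 2) with hM
  have hdsa : star d = d := (IsSelfAdjoint.of_nonneg hd0).star_eq
  set a : D := inner D ξ ξ with ha
  set b : D := inner D η η with hb
  have ha0 : 0 ≤ a := CStarModule.inner_self_nonneg
  have hb0 : 0 ≤ b := CStarModule.inner_self_nonneg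
  -- cross term vanishes
  have hcross : (inner D ξ η : D) = 0 := by
    have h1 : (inner D ξ η : D) = d * inner D ξ η := by
      conv_lhs => rw [← hξ, CStarModule.inner_op_smul_left, hdsa, mul_comm]
    have h2 : (inner D ξ η : D) * d = 0 := by
      rw [mul_comm, ← CStarModule.inner_op_smul_right, hη, CStarModule.inner_zero_right]
    rw [h1, mul_comm, h2]
  have hcross' : (inner D η ξ : D) = 0 := by
    rw [← CStarModule.star_inner, hcross, star_zero]
  have hexpand : (inner D (ξ + η) (ξ + η) : D) = a + b := by
    rw [CStarModule.inner_add_left, CStarModule.inner_add_right,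
      CStarModule.inner_add_right, hcross, hcross']
    abel
  -- estimate for a
  have hna : ‖a‖ = ‖ξ‖ ^ 2 := (CStarModule.norm_sq_eq (A := D)).symm
  have haest : a ≤ (‖ξ‖ ^ 2) • (d * d) := by
    have : (inner D ξ ξ : D) = star d * a * d := by
      conv_lhs => rw [← hξ, CStarModule.inner_op_smul_left, CStarModule.inner_op_smul_right]
      rw [hdsa]
    calc a = star d * a * d := this
      _ ≤ ‖a‖ • (star d * d) :=
          CStarAlgebra.star_left_conjugate_le_norm_smul (CStarModule.isSelfAdjoint_inner_self)
      _ = (‖ξ‖ ^ 2) • (d * d) := by rw [hna, hdsa]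
  -- b * d = 0
  have hbd : b * d = 0 := by
    rw [mul_comm, ← CStarModule.inner_op_smul_right, hη, CStarModule.inner_zero_right]
  -- b ≤ M • 1
  have hbM : b ≤ M • (1 : D) := by
    have h1 : b ≤ algebraMap ℝ D ‖b‖ :=
      IsSelfAdjoint.le_algebraMap_norm_self (CStarModule.isSelfAdjoint_inner_self)
    have hnb : ‖b‖ = ‖η‖ ^ 2 := (CStarModule.norm_sq_eq (A := D)).symm
    calc b ≤ algebraMap ℝ D ‖b‖ := h1
      _ = ‖b‖ • (1 : D) := by rw [Algebra.algebraMap_eq_smul_one]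
      _ ≤ M • (1 : D) := by
          apply smul_le_smul_of_nonneg_right _ zero_le_one
          rw [hnb]; exact le_max_right _ _
  -- d ≤ 1 and d*d ≤ d
  have hd_le_one : d ≤ 1 := (CStarAlgebra.norm_le_one_iff_of_nonneg d hd0).mp hd1
  have hdd : d * d ≤ d := by
    have := CStarAlgebra.pow_antitone hd0 hd_le_one (Nat.le_of_lt Nat.one_lt_two)
    simpa [pow_two] using this
  -- key: b ≤ M • (1 - d)
  have hb_le : b ≤ M • ((1 : D) - d) := by
    have h1 : 0 ≤ (M • (1 : D) - b) * (1 - d) := by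
      apply comm_mul_nonneg
      · exact sub_nonneg.mpr hbM
      · exact sub_nonneg.mpr hd_le_one
    have h2 : (M • (1 : D) - b) * (1 - d) = M • ((1 : D) - d) - b := by
      simp only [sub_mul, mul_sub, mul_one, smul_sub, smul_mul_assoc, one_mul, hbd, sub_zero]
      abel
    rw [h2] at h1
    exact sub_nonneg.mp h1
  -- a ≤ M • (d * d)
  have ha_le : a ≤ M • (d * d) := by
    refine haest.trans ?_
    have hdd0 : 0 ≤ d * d := comm_mul_nonneg hd0 hd0
    exact smul_le_smul_of_nonneg_right (le_max_left _ _) hdd0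
  -- combine
  have hM0 : (0 : ℝ) ≤ M := le_trans (sq_nonneg _) (le_max_left _ _)
  calc (inner D (ξ + η) (ξ + η) : D) = a + b := hexpand
    _ ≤ M • (d * d) + M • ((1 : D) - d) := add_le_add ha_le hb_le
    _ = M • (d * d + (1 - d)) := by rw [smul_add]
    _ ≤ M • (1 : D) := by
        apply smul_le_smul_of_nonneg_left _ hM0
        have : d * d + (1 - d) ≤ d + (1 - d) := add_le_add_left hdd _
        simpa using this
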